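/- Let f : ℂ → ℝ be C² and G_k the cumulant polynomial built from f. For k ≥ 3, z_0 ∈ ℂ and any m, l ∈ {1,2}: Σ_{r=1}^k (∂_{rm}∂_{rl} G_k)(z_0,…,z_0) = 0, where ∂_{rm} denotes the partial derivative in the m-th real coordinate of the r-th variable. -/

import Mathlib

open scoped BigOperators

/-- The cumulant polynomial
`G_k(z_1,…,z_k) = Σ_{j=1}^k ((-1)^{j-1}/j) Σ_{k_1+⋯+k_j=k, k_i≥1}
  (k!/(k_1!⋯k_j!)) Π_{l=1}^j f(z_l)^{k_l}`,
realized as a sum over `Composition k` (with `c.length` playing the role of `j`). -/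
noncomputable def cumulantG (f : ℂ → ℝ) (k : ℕ) (z : Fin k → ℂ) : ℝ :=
  ∑ c : Composition k,
    ((-1 : ℝ) ^ (c.length - 1) / (c.length : ℝ)) *
      ((Nat.factorial k : ℝ) /
        ∏ i : Fin c.length, (Nat.factorial (c.blocksFun i) : ℝ)) *
      ∏ i : Fin c.length, f (z (Fin.castLE c.length_le i)) ^ (c.blocksFun i)

/-- The unit vector of `ℂ^k ≅ (ℝ²)^k` pointing in the `j`-th real coordinate direction
(`j = 0`: real part, `j = 1`: imaginary part) of the `r`-th variable.  Differentiating
along `coordDir k r j` is the partial derivative `∂_{r j}` with respect to the `j`-th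
real coordinate of the `r`-th complex variable. -/
noncomputable def coordDir (k : ℕ) (r : Fin k) (j : Fin 2) : Fin k → ℂ :=
  Pi.single r (if j = 0 then (1 : ℂ) else Complex.I)


namespace CumulantAux

lemma cons_headI_tail {α} [Inhabited α] {L : List α} (h : L ≠ []) :
    L.headI :: L.tail = L := by
  cases L with
  | nil => exact absurd rfl h
  | cons a t => rfl

lemma blocks_ne_nil {k : ℕ} (hk : 1 ≤ k) (c : Composition k) : c.blocks ≠ [] := by
  intro h
  have := c.blocks_sum
  rw [h] at this
  simp at this
  omega

lemma headI_add_tail_sum {k : ℕ} (hk : 1 ≤ k) (c : Composition k) :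
    c.blocks.headI + c.blocks.tail.sum = k := by
  have h := blocks_ne_nil hk c
  have := c.blocks_sum
  rw [← cons_headI_tail h] at this
  simpa using this

lemma headI_mem_blocks {k : ℕ} (hk : 1 ≤ k) (c : Composition k) :
    c.blocks.headI ∈ c.blocks := by
  have h := blocks_ne_nil hk c
  cases hL : c.blocks with
  | nil => exact absurd hL h
  | cons a t => simp

lemma comp_sum_peel {k : ℕ} (hk : 1 ≤ k) (F : List ℕ → ℝ) :
    ∑ c : Composition k, F c.blocks
      = ∑ n ∈ Finset.Icc 1 k, ∑ c : Composition (k - n), F (n :: c.blocks) := by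
  rw [Finset.sum_sigma']
  refine Finset.sum_bij'
    (fun c _ => (⟨c.blocks.headI,
      ⟨c.blocks.tail, fun hi => c.blocks_pos (List.mem_of_mem_tail hi), by
        have := headI_add_tail_sum hk c; omega⟩⟩ : Σ n : ℕ, Composition (k - n)))
    (fun x hx =>
      ⟨x.1 :: x.2.blocks, by
        intro i hi
        rcases List.mem_cons.1 hi with h | h
        · have := (Finset.mem_Icc.1 (Finset.mem_sigma.1 hx).1).1; omega
        · exact x.2.blocks_pos h, by
        have hx1 := Finset.mem_Icc.1 (Finset.mem_sigma.1 hx).1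
        have := x.2.blocks_sum
        simp only [List.sum_cons, this]
        omega⟩)
    ?_ ?_ ?_ ?_ ?_
  · intro c _
    rw [Finset.mem_sigma]
    constructor
    · rw [Finset.mem_Icc]
      constructor
      · exact c.blocks_pos (headI_mem_blocks hk c)
      · show c.blocks.headI ≤ k
        have := headI_add_tail_sum hk c; omega
    · exact Finset.mem_univ _
  · intro x hx; exact Finset.mem_univ _
  · intro c hc
    apply Composition.ext
    simp [cons_headI_tail (blocks_ne_nil hk c)]
  · intro x hx
    apply Sigma.ext
    · rfl
    · apply heq_of_eq
      apply Composition.ext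
      rfl
  · intro c hc
    simp [cons_headI_tail (blocks_ne_nil hk c)]


lemma prod_fin_eq_map_prod (L : List ℕ) (F : ℕ → ℝ) :
    ∏ i : Fin L.length, F (L.get i) = (L.map F).prod := by
  induction L with
  | nil => simp
  | cons a t ih =>
    rw [List.map_cons, List.prod_cons, ← ih]
    exact Fin.prod_univ_succ fun i : Fin (t.length + 1) => F ((a :: t).get i)

/-- real-valued product of factorials of a list -/
noncomputable def pfr (L : List ℕ) : ℝ := (((L.map Nat.factorial).prod : ℕ) : ℝ)

lemma pfr_pos (L : List ℕ) : 0 < pfr L := by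
  unfold pfr
  have : 0 < (L.map Nat.factorial).prod := by
    apply List.prod_pos
    intro a ha
    rcases List.mem_map.1 ha with ⟨b, -, rfl⟩
    exact Nat.factorial_pos b
  exact_mod_cast this

lemma pfr_cons (n : ℕ) (L : List ℕ) : pfr (n :: L) = (n.factorial : ℝ) * pfr L := by
  unfold pfr
  push_cast [List.map_cons, List.prod_cons]
  ring

lemma prod_blocksFun_factorial {k : ℕ} (c : Composition k) :
    ∏ i : Fin c.length, ((c.blocksFun i).factorial : ℝ) = pfr c.blocks := by
  unfold pfr
  rw [Nat.cast_list_prod, List.map_map]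
  exact prod_fin_eq_map_prod c.blocks (fun n => ((n.factorial : ℕ) : ℝ))

lemma composition_zero_blocks (c : Composition 0) : c.blocks = [] := by
  cases hL : c.blocks with
  | nil => rfl
  | cons a t =>
    exfalso
    have h1 : 0 < a := c.blocks_pos (by rw [hL]; exact List.mem_cons_self)
    have := c.blocks_sum
    rw [hL, List.sum_cons] at this
    omega

lemma sum_composition_zero (F : List ℕ → ℝ) : ∑ c : Composition 0, F c.blocks = F [] := by
  have h1 : ∀ c : Composition 0, F c.blocks = F [] := fun c => by
    rw [composition_zero_blocks c]
  rw [Finset.sum_congr rfl (fun c _ => h1 c), Finset.sum_const, Finset.card_univ,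
    composition_card]
  simp

/-- `S(m) = Σ_c (-1)^{len c} / ∏ b_i!` -/
noncomputable def Sc (m : ℕ) : ℝ := ∑ c : Composition m, (-1 : ℝ) ^ c.length / pfr c.blocks

lemma sum_Icc_one (m : ℕ) (f : ℕ → ℝ) :
    ∑ n ∈ Finset.Icc 1 m, f n = ∑ i ∈ Finset.range m, f (i + 1) := by
  rw [← Finset.Ico_add_one_right_eq_Icc, Finset.sum_Ico_eq_sum_range]
  simp [add_comm]

lemma alt_range {K : ℕ} (hK : K ≠ 0) :
    ∑ i ∈ Finset.range (K + 1), (-1 : ℝ) ^ i * (K.choose i : ℝ) = 0 := by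
  have h := Int.alternating_sum_range_choose_of_ne hK
  have h2 := congrArg (fun z : ℤ => (z : ℝ)) h
  push_cast at h2
  simpa using h2

lemma neg_one_pow_sub {n m : ℕ} (h : n ≤ m) :
    (-1 : ℝ) ^ (m - n) = (-1) ^ m * (-1) ^ n := by
  have h1 : (-1 : ℝ) ^ (m - n) * (-1) ^ n = (-1) ^ m := by
    rw [← pow_add, Nat.sub_add_cancel h]
  have h2 : ((-1 : ℝ) ^ n) * ((-1) ^ n) = 1 := by
    rw [← pow_add, ← two_mul, pow_mul]
    norm_num
  calc (-1 : ℝ) ^ (m - n) = (-1 : ℝ) ^ (m - n) * (((-1 : ℝ) ^ n) * ((-1) ^ n)) := by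
        rw [h2, mul_one]
    _ = (-1) ^ m * (-1) ^ n := by rw [← mul_assoc, h1]

lemma alt_sum_Icc {m : ℕ} (hm : 1 ≤ m) :
    ∑ n ∈ Finset.Icc 1 m, (-1 : ℝ) ^ n * (m.choose n : ℝ) = -1 := by
  have h0 := alt_range (K := m) (by omega)
  rw [Finset.sum_range_succ'] at h0
  simp only [pow_zero, Nat.choose_zero_right, Nat.cast_one, one_mul, mul_one] at h0
  rw [sum_Icc_one]
  linarith

lemma Sc_eq : ∀ m : ℕ, Sc m = (-1 : ℝ) ^ m / (m.factorial : ℝ) := by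
  intro m
  induction m using Nat.strong_induction_on with
  | _ m ih =>
    rcases Nat.eq_zero_or_pos m with rfl | hm
    · unfold Sc
      rw [sum_composition_zero (fun L => (-1 : ℝ) ^ L.length / pfr L)]
      simp [pfr]
    · unfold Sc
      rw [comp_sum_peel hm (fun L => (-1 : ℝ) ^ L.length / pfr L)]
      have hterm : ∀ n ∈ Finset.Icc 1 m,
          (∑ c : Composition (m - n), (-1 : ℝ) ^ ((n :: c.blocks).length) / pfr (n :: c.blocks))
            = (-1) ^ m * ((-1) ^ (n+1) * (m.choose n : ℝ)) / (m.factorial : ℝ) := by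
        intro n hn
        rw [Finset.mem_Icc] at hn
        have hSc : ∑ c : Composition (m - n), (-1 : ℝ) ^ ((n :: c.blocks).length) / pfr (n :: c.blocks)
            = (-(1:ℝ)/(n.factorial : ℝ)) * Sc (m - n) := by
          unfold Sc
          rw [Finset.mul_sum]
          apply Finset.sum_congr rfl
          intro c _
          rw [List.length_cons, pfr_cons, pow_succ]
          have h1 : (n.factorial : ℝ) ≠ 0 := by positivity
          have h2 : pfr c.blocks ≠ 0 := ne_of_gt (pfr_pos _)
          field_simp
        rw [hSc, ih (m - n) (by omega)]
        have hc : ((m.choose n : ℝ)) = (m.factorial : ℝ) / ((n.factorial : ℝ) * ((m-n).factorial : ℝ)) :=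
          Nat.cast_choose ℝ hn.2
        have h1 : (n.factorial : ℝ) ≠ 0 := by positivity
        have h2 : ((m-n).factorial : ℝ) ≠ 0 := by positivity
        have h3 : (m.factorial : ℝ) ≠ 0 := by positivity
        rw [neg_one_pow_sub hn.2, hc]
        field_simp
        ring
      rw [Finset.sum_congr rfl hterm, ← Finset.sum_div, ← Finset.mul_sum]
      have : ∑ n ∈ Finset.Icc 1 m, ((-1:ℝ) ^ (n+1) * (m.choose n : ℝ))
          = ∑ n ∈ Finset.Icc 1 m, (-1) * ((-1:ℝ) ^ n * (m.choose n : ℝ)) := by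
        apply Finset.sum_congr rfl; intro n _; rw [pow_succ]; ring
      rw [this, ← Finset.mul_sum, alt_sum_Icc hm]
      ring


lemma combW {k : ℕ} (hk : 1 ≤ k) (ψ : ℕ → ℝ) :
    ∑ c : Composition k, (-1 : ℝ) ^ (c.blocks.length - 1) * ψ c.blocks.headI / pfr c.blocks
      = ∑ n ∈ Finset.Icc 1 k,
          (-1 : ℝ) ^ (k - n) * ψ n / ((n.factorial : ℝ) * ((k - n).factorial : ℝ)) := by
  rw [comp_sum_peel hk (fun L => (-1 : ℝ) ^ (L.length - 1) * ψ L.headI / pfr L)]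
  apply Finset.sum_congr rfl
  intro n hn
  rw [Finset.mem_Icc] at hn
  have key : ∑ c : Composition (k - n),
      (-1 : ℝ) ^ ((n :: c.blocks).length - 1) * ψ (n :: c.blocks).headI / pfr (n :: c.blocks)
      = (ψ n / (n.factorial : ℝ)) * Sc (k - n) := by
    unfold Sc
    rw [Finset.mul_sum]
    apply Finset.sum_congr rfl
    intro c _
    rw [List.length_cons, pfr_cons, List.headI_cons]
    simp only [Nat.add_sub_cancel]
    have h1 : (n.factorial : ℝ) ≠ 0 := by positivity
    have h2 : pfr c.blocks ≠ 0 := ne_of_gt (pfr_pos _)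
    field_simp
  rw [key, Sc_eq]
  have h1 : (n.factorial : ℝ) ≠ 0 := by positivity
  have h2 : ((k - n).factorial : ℝ) ≠ 0 := by positivity
  field_simp

/-- rotation of a composition -/
def rotC {k : ℕ} (c : Composition k) (n : ℕ) : Composition k :=
  ⟨c.blocks.rotate n, fun hi => c.blocks_pos ((List.mem_rotate).1 hi),
    by rw [(List.rotate_perm c.blocks n).sum_eq, c.blocks_sum]⟩

lemma rotC_blocks {k : ℕ} (c : Composition k) (n : ℕ) :
    (rotC c n).blocks = c.blocks.rotate n := rfl

lemma length_rotC {k : ℕ} (c : Composition k) (n : ℕ) : (rotC c n).length = c.length :=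
  List.length_rotate c.blocks n

lemma headI_eq_get {α} [Inhabited α] (L : List α) (h : 0 < L.length) :
    L.headI = L.get ⟨0, h⟩ := by
  cases L with
  | nil => simp at h
  | cons a t => rfl

lemma headI_rotate {α} [Inhabited α] (L : List α) (i : ℕ) (h : i < L.length) :
    (L.rotate i).headI = L.get ⟨i, h⟩ := by
  have hlen : 0 < (L.rotate i).length := by rw [List.length_rotate]; omega
  rw [headI_eq_get _ hlen, List.get_rotate]
  congr 1
  exact Fin.ext (by simp [Nat.mod_eq_of_lt h])

lemma rot_lemma {k : ℕ} (F : List ℕ → ℝ)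
    (hF : ∀ (L : List ℕ) (n : ℕ), F (L.rotate n) = F L) (ψ : ℕ → ℝ) :
    ∑ c : Composition k, ∑ i : Fin c.length, F c.blocks * ψ (c.blocksFun i)
      = ∑ c : Composition k, (c.length : ℝ) * (F c.blocks * ψ c.blocks.headI) := by
  have hRHS : ∀ c : Composition k, (c.length : ℝ) * (F c.blocks * ψ c.blocks.headI)
      = ∑ _i : Fin c.length, F c.blocks * ψ c.blocks.headI := by
    intro c
    rw [Finset.sum_const, Finset.card_univ, Fintype.card_fin, nsmul_eq_mul]
  rw [Finset.sum_congr rfl (fun c _ => hRHS c)]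
  rw [Finset.sum_sigma', Finset.sum_sigma']
  rw [Finset.univ_sigma_univ]
  set X := (Σ c : Composition k, Fin c.length)
  let e : X → X := fun x => ⟨rotC x.1 x.2, Fin.cast (length_rotC x.1 x.2).symm x.2⟩
  have hinj : Function.Injective e := by
    rintro ⟨c, i⟩ ⟨c', i'⟩ hxy
    have hv : (i : ℕ) = (i' : ℕ) := congrArg (fun z : X => (z.2 : ℕ)) hxy
    have hb : c.blocks.rotate (i : ℕ) = c'.blocks.rotate (i' : ℕ) :=
      congrArg (fun z : X => z.1.blocks) hxy
    rw [← hv] at hb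
    have hbl : c.blocks = c'.blocks := List.rotate_injective (i : ℕ) hb
    have hc : c = c' := Composition.ext hbl
    subst hc
    have : i = i' := Fin.ext hv
    subst this
    rfl
  have hbij : Function.Bijective e := Finite.injective_iff_bijective.mp hinj
  rw [← Function.Bijective.sum_comp hbij (fun y : X => F y.1.blocks * ψ y.1.blocks.headI)]
  apply Finset.sum_congr rfl
  rintro ⟨c, i⟩ -
  have hi : (i : ℕ) < c.blocks.length := by
    rw [Composition.blocks_length]; exact i.isLt
  show F c.blocks * ψ (c.blocksFun i) = F (c.blocks.rotate (i : ℕ)) * ψ ((c.blocks.rotate (i : ℕ)).headI)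
  rw [hF, headI_rotate c.blocks (i : ℕ) hi]
  rfl


lemma length_pos {k : ℕ} (hk : 1 ≤ k) (c : Composition k) : 0 < c.length := by
  rcases Nat.eq_zero_or_pos c.length with h | h
  · exfalso
    apply blocks_ne_nil hk c
    apply List.length_eq_zero_iff.1
    rw [Composition.blocks_length]
    exact h
  · exact h

lemma pfr_rotate (L : List ℕ) (n : ℕ) : pfr (L.rotate n) = pfr L := by
  unfold pfr
  rw [((List.rotate_perm L n).map Nat.factorial).prod_eq]

lemma comb_main {k : ℕ} (hk : 1 ≤ k) (ψ : ℕ → ℝ) :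
    ∑ c : Composition k,
      ((-1 : ℝ) ^ (c.length - 1) / (c.length : ℝ)) *
        ((k.factorial : ℝ) / ∏ i : Fin c.length, ((c.blocksFun i).factorial : ℝ)) *
        (∑ i : Fin c.length, ψ (c.blocksFun i))
      = ∑ n ∈ Finset.Icc 1 k, (-1 : ℝ) ^ (k - n) * (k.choose n : ℝ) * ψ n := by
  set Fw : List ℕ → ℝ :=
    fun L => ((-1 : ℝ) ^ (L.length - 1) / (L.length : ℝ)) * ((k.factorial : ℝ) / pfr L) with hFw
  have h1 : ∀ c : Composition k,
      ((-1 : ℝ) ^ (c.length - 1) / (c.length : ℝ)) *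
        ((k.factorial : ℝ) / ∏ i : Fin c.length, ((c.blocksFun i).factorial : ℝ)) *
        (∑ i : Fin c.length, ψ (c.blocksFun i))
      = ∑ i : Fin c.length, Fw c.blocks * ψ (c.blocksFun i) := by
    intro c
    rw [← Finset.mul_sum, prod_blocksFun_factorial, hFw]
  rw [Finset.sum_congr rfl (fun c _ => h1 c)]
  rw [rot_lemma Fw (by
    intro L n
    rw [hFw]
    simp only [List.length_rotate, pfr_rotate]) ψ]
  have h2 : ∀ c : Composition k,
      (c.length : ℝ) * (Fw c.blocks * ψ c.blocks.headI)
      = (k.factorial : ℝ) * ((-1 : ℝ) ^ (c.blocks.length - 1) * ψ c.blocks.headI / pfr c.blocks) := by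
    intro c
    have hlen : (0 : ℝ) < (c.length : ℝ) := by
      exact_mod_cast length_pos hk c
    have hpfr : pfr c.blocks ≠ 0 := ne_of_gt (pfr_pos _)
    rw [hFw]
    simp only [Composition.blocks_length]
    field_simp
  rw [Finset.sum_congr rfl (fun c _ => h2 c), ← Finset.mul_sum, combW hk ψ, Finset.mul_sum]
  apply Finset.sum_congr rfl
  intro n hn
  rw [Finset.mem_Icc] at hn
  have hc := Nat.cast_choose ℝ hn.2
  have h1 : (n.factorial : ℝ) ≠ 0 := by positivity
  have h2 : ((k - n).factorial : ℝ) ≠ 0 := by positivity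
  rw [hc]
  field_simp

lemma choose_succ_mul {K : ℕ} (i : ℕ) (hK : 1 ≤ K) :
    (K.choose (i + 1)) * (i + 1) = K * ((K - 1).choose i) := by
  have h := Nat.add_one_mul_choose_eq (K - 1) i
  have hK1 : K - 1 + 1 = K := by omega
  rw [hK1] at h
  exact h.symm

lemma alt_linear {k : ℕ} (hk : 2 ≤ k) :
    ∑ n ∈ Finset.Icc 1 k, (-1 : ℝ) ^ (k - n) * (k.choose n : ℝ) * (n : ℝ) = 0 := by
  rw [sum_Icc_one]
  have hterm : ∀ i ∈ Finset.range k,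
      (-1 : ℝ) ^ (k - (i + 1)) * (k.choose (i + 1) : ℝ) * ((i + 1 : ℕ) : ℝ)
      = ((k : ℝ) * (-1) ^ (k - 1)) * ((-1) ^ i * ((k - 1).choose i : ℝ)) := by
    intro i hi
    rw [Finset.mem_range] at hi
    have hs : k - (i + 1) = (k - 1) - i := by omega
    have hle : i ≤ k - 1 := by omega
    rw [hs, neg_one_pow_sub hle]
    have hc : ((k.choose (i + 1) : ℝ)) * ((i + 1 : ℕ) : ℝ) = (k : ℝ) * (((k - 1).choose i : ℝ)) := by
      exact_mod_cast congrArg (Nat.cast : ℕ → ℝ) (choose_succ_mul i (by omega : 1 ≤ k))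
    linear_combination ((-1 : ℝ) ^ (k - 1) * (-1) ^ i) * hc
  rw [Finset.sum_congr rfl hterm, ← Finset.mul_sum]
  have h0 : ∑ i ∈ Finset.range k, (-1 : ℝ) ^ i * ((k - 1).choose i : ℝ) = 0 := by
    have h := alt_range (K := k - 1) (by omega)
    have hkk : k - 1 + 1 = k := by omega
    rw [hkk] at h
    exact h
  rw [h0, mul_zero]

lemma alt_range_mul {K : ℕ} (hK : 2 ≤ K) :
    ∑ i ∈ Finset.range (K + 1), (-1 : ℝ) ^ i * (K.choose i : ℝ) * (i : ℝ) = 0 := by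
  rw [Finset.sum_range_succ']
  simp only [Nat.cast_zero, mul_zero, add_zero]
  have hterm2 : ∀ j ∈ Finset.range K,
      (-1 : ℝ) ^ (j + 1) * (K.choose (j + 1) : ℝ) * ((j + 1 : ℕ) : ℝ)
      = (-((K : ℕ) : ℝ)) * ((-1) ^ j * ((K - 1).choose j : ℝ)) := by
    intro j hj
    have hc : ((K.choose (j + 1) : ℝ)) * ((j + 1 : ℕ) : ℝ)
        = ((K : ℕ) : ℝ) * (((K - 1).choose j : ℝ)) := by
      exact_mod_cast congrArg (Nat.cast : ℕ → ℝ) (choose_succ_mul j (by omega : 1 ≤ K))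
    rw [pow_succ]
    push_cast at hc ⊢
    linear_combination (-(1 : ℝ) * (-1) ^ j) * hc
  rw [Finset.sum_congr rfl hterm2, ← Finset.mul_sum]
  have h0 : ∑ j ∈ Finset.range K, (-1 : ℝ) ^ j * ((K - 1).choose j : ℝ) = 0 := by
    have h := alt_range (K := K - 1) (by omega)
    have hkk : K - 1 + 1 = K := by omega
    rw [hkk] at h
    exact h
  rw [h0, mul_zero]

lemma alt_quad {k : ℕ} (hk : 3 ≤ k) :
    ∑ n ∈ Finset.Icc 1 k, (-1 : ℝ) ^ (k - n) * (k.choose n : ℝ) * ((n : ℝ) * ((n : ℝ) - 1)) = 0 := by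
  rw [sum_Icc_one]
  have hterm : ∀ i ∈ Finset.range k,
      (-1 : ℝ) ^ (k - (i + 1)) * (k.choose (i + 1) : ℝ) * (((i + 1 : ℕ) : ℝ) * (((i + 1 : ℕ) : ℝ) - 1))
      = ((k : ℝ) * (-1) ^ (k - 1)) * ((-1) ^ i * ((k - 1).choose i : ℝ) * (i : ℝ)) := by
    intro i hi
    rw [Finset.mem_range] at hi
    have hs : k - (i + 1) = (k - 1) - i := by omega
    have hle : i ≤ k - 1 := by omega
    rw [hs, neg_one_pow_sub hle]
    have hc : ((k.choose (i + 1) : ℝ)) * ((i + 1 : ℕ) : ℝ) = (k : ℝ) * (((k - 1).choose i : ℝ)) := by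
      exact_mod_cast congrArg (Nat.cast : ℕ → ℝ) (choose_succ_mul i (by omega : 1 ≤ k))
    push_cast at hc ⊢
    linear_combination ((-1 : ℝ) ^ (k - 1) * (-1) ^ i * (i : ℝ)) * hc
  rw [Finset.sum_congr rfl hterm, ← Finset.mul_sum]
  have inner : ∑ i ∈ Finset.range k, (-1 : ℝ) ^ i * ((k - 1).choose i : ℝ) * (i : ℝ) = 0 := by
    have h := alt_range_mul (K := k - 1) (by omega)
    have hkk : k - 1 + 1 = k := by omega
    rw [hkk] at h
    exact h
  rw [inner, mul_zero]


/-! ### Analysis part -/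

section Analysis

variable {f : ℂ → ℝ}

noncomputable def coeffC {k : ℕ} (c : Composition k) : ℝ :=
  ((-1 : ℝ) ^ (c.length - 1) / (c.length : ℝ)) *
    ((Nat.factorial k : ℝ) / ∏ i : Fin c.length, (Nat.factorial (c.blocksFun i) : ℝ))

lemma cumulantG_eq (f : ℂ → ℝ) (k : ℕ) (z : Fin k → ℂ) :
    cumulantG f k z = ∑ c : Composition k,
      coeffC c * ∏ i : Fin c.length, f (z (Fin.castLE c.length_le i)) ^ (c.blocksFun i) := rfl

lemma contDiff_cumulantG (hf : ContDiff ℝ 2 f) (k : ℕ) : ContDiff ℝ 2 (cumulantG f k) := by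
  unfold cumulantG
  apply ContDiff.sum
  intro c _
  apply ContDiff.mul contDiff_const
  apply contDiff_prod
  intro i _
  exact (hf.comp
    (ContinuousLinearMap.proj (R := ℝ) (φ := fun _ : Fin k => ℂ)
      (Fin.castLE c.length_le i)).contDiff).pow _

lemma slice {E : Type*} [NormedAddCommGroup E] [NormedSpace ℝ E]
    (G : E → ℝ) (hG : ContDiff ℝ 2 G) (x u v : E) :
    fderiv ℝ (fun z => fderiv ℝ G z v) x u
      = deriv (fun s : ℝ => deriv (fun t : ℝ => G (x + s • u + t • v)) 0) 0 := by
  have hGd : Differentiable ℝ G := hG.differentiable (by norm_num)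
  have hfd : ContDiff ℝ 1 (fderiv ℝ G) := hG.fderiv_right (by norm_num)
  have hF1 : Differentiable ℝ (fun z => fderiv ℝ G z v) :=
    (hfd.differentiable (by norm_num)).clm_apply (differentiable_const v)
  have hline : ∀ (z : E) (w : E), HasDerivAt (fun t : ℝ => z + t • w) w 0 := by
    intro z w
    simpa using ((hasDerivAt_id (0 : ℝ)).smul_const w).const_add z
  have h1 : ∀ z : E, deriv (fun t : ℝ => G (z + t • v)) 0 = fderiv ℝ G z v := by
    intro z
    have h := (hGd (z + (0 : ℝ) • v)).hasFDerivAt.comp_hasDerivAt 0 (hline z v)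
    simp only [Function.comp_def] at h
    rw [h.deriv]
    norm_num
  have h2 : (fun s : ℝ => deriv (fun t : ℝ => G (x + s • u + t • v)) 0)
      = fun s : ℝ => fderiv ℝ G (x + s • u) v := by
    funext s
    exact h1 (x + s • u)
  rw [h2]
  have h3 := (hF1 (x + (0 : ℝ) • u)).hasFDerivAt.comp_hasDerivAt 0 (hline x u)
  simp only [Function.comp_def] at h3
  rw [h3.deriv]
  norm_num


noncomputable def dv (j : Fin 2) : ℂ := if j = 0 then 1 else Complex.I

lemma coordDir_eq (k : ℕ) (r : Fin k) (j : Fin 2) : coordDir k r j = Pi.single r (dv j) := rfl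

lemma prod_eval (f : ℂ → ℝ) {k : ℕ} (c : Composition k) (r : Fin k) (z0 w : ℂ) :
    ∏ i : Fin c.length, f ((fun j => if j = r then w else z0) (Fin.castLE c.length_le i))
        ^ (c.blocksFun i)
    = if h : (r : ℕ) < c.length
      then f w ^ (c.blocksFun ⟨r, h⟩) * f z0 ^ (k - c.blocksFun ⟨r, h⟩)
      else f z0 ^ k := by
  by_cases h : (r : ℕ) < c.length
  · rw [dif_pos h]
    set i0 : Fin c.length := ⟨(r : ℕ), h⟩ with hi0
    have hcast : Fin.castLE c.length_le i0 = r := by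
      apply Fin.ext
      rfl
    rw [← Finset.mul_prod_erase Finset.univ _ (Finset.mem_univ i0)]
    congr 1
    · rw [hcast]
      simp
    · have hrest : ∀ i ∈ Finset.univ.erase i0,
          f (if Fin.castLE c.length_le i = r then w else z0) ^ c.blocksFun i
            = f z0 ^ c.blocksFun i := by
        intro i hi
        have hne : Fin.castLE c.length_le i ≠ r := by
          intro hh
          apply (Finset.mem_erase.1 hi).1
          apply Fin.ext
          have : ((i : ℕ) : ℕ) = (r : ℕ) := congrArg Fin.val hh
          exact this
        rw [if_neg hne]
      rw [Finset.prod_congr rfl hrest, Finset.prod_pow_eq_pow_sum]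
      congr 1
      have hsum := c.sum_blocksFun
      have herase := Finset.sum_erase_add Finset.univ c.blocksFun (Finset.mem_univ i0)
      omega
  · rw [dif_neg h]
    have hall : ∀ i ∈ Finset.univ,
        f (if Fin.castLE c.length_le i = r then w else z0) ^ c.blocksFun i
          = f z0 ^ c.blocksFun i := by
      intro i _
      have hne : Fin.castLE c.length_le i ≠ r := by
        intro hh
        apply h
        have : ((i : ℕ)) = (r : ℕ) := congrArg Fin.val hh
        omega
      rw [if_neg hne]
    rw [Finset.prod_congr rfl hall, Finset.prod_pow_eq_pow_sum, c.sum_blocksFun]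

lemma pt_eq (k : ℕ) (r : Fin k) (z0 : ℂ) (m l : Fin 2) (s t : ℝ) :
    (fun _ : Fin k => z0) + s • coordDir k r m + t • coordDir k r l
      = fun j => if j = r then (z0 + s • dv m + t • dv l) else z0 := by
  funext j
  by_cases hj : j = r
  · subst hj
    simp [coordDir_eq, Pi.single_apply]
  · simp [coordDir_eq, Pi.single_apply, hj]

lemma Geval (f : ℂ → ℝ) (k : ℕ) (r : Fin k) (z0 : ℂ) (m l : Fin 2) (s t : ℝ) :
    cumulantG f k ((fun _ : Fin k => z0) + s • coordDir k r m + t • coordDir k r l)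
      = ∑ c : Composition k, coeffC c *
          (if h : (r : ℕ) < c.length
            then f (z0 + s • dv m + t • dv l) ^ (c.blocksFun ⟨r, h⟩)
                * f z0 ^ (k - c.blocksFun ⟨r, h⟩)
            else f z0 ^ k) := by
  rw [pt_eq, cumulantG_eq]
  apply Finset.sum_congr rfl
  intro c _
  rw [prod_eval f c r z0 (z0 + s • dv m + t • dv l)]


lemma hline (z w : ℂ) : HasDerivAt (fun t : ℝ => z + t • w) w 0 := by
  simpa using ((hasDerivAt_id (0 : ℝ)).smul_const w).const_add z

lemma hasDerivAt_f_comp (hfd : Differentiable ℝ f) (z w : ℂ) :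
    HasDerivAt (fun t : ℝ => f (z + t • w)) (fderiv ℝ f z w) 0 := by
  have hh := (hfd (z + (0 : ℝ) • w)).hasFDerivAt.comp_hasDerivAt 0 (hline z w)
  simp only [Function.comp_def] at hh
  simpa only [zero_smul, add_zero] using hh

lemma hasDerivAt_f_pow (hfd : Differentiable ℝ f) (z w : ℂ) (b : ℕ) :
    HasDerivAt (fun t : ℝ => f (z + t • w) ^ b)
      ((b : ℝ) * f z ^ (b - 1) * fderiv ℝ f z w) 0 := by
  have h2 := (hasDerivAt_f_comp hfd z w).pow (n := b)
  simpa only [zero_smul, add_zero, Pi.pow_def] using h2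

lemma diff_F2 (hf : ContDiff ℝ 2 f) (u : ℂ) :
    Differentiable ℝ (fun x => fderiv ℝ f x u) :=
  ((hf.fderiv_right (m := 1) (by norm_num)).differentiable (by norm_num)).clm_apply (differentiable_const _)

lemma hasDerivAt_F2 (hf : ContDiff ℝ 2 f) (z w u : ℂ) :
    HasDerivAt (fun t : ℝ => fderiv ℝ f (z + t • w) u)
      (fderiv ℝ (fun x => fderiv ℝ f x u) z w) 0 := by
  have hh := ((diff_F2 hf u) (z + (0 : ℝ) • w)).hasFDerivAt.comp_hasDerivAt 0 (hline z w)
  simp only [Function.comp_def] at hh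
  simpa only [zero_smul, add_zero] using hh

lemma D2r (hf : ContDiff ℝ 2 f) (k : ℕ) (r : Fin k) (z0 : ℂ) (m l : Fin 2) :
    deriv (fun s : ℝ => deriv (fun t : ℝ =>
        cumulantG f k ((fun _ : Fin k => z0) + s • coordDir k r m + t • coordDir k r l)) 0) 0
    = ∑ c : Composition k, coeffC c *
        (if h : (r : ℕ) < c.length then
          (((c.blocksFun ⟨r, h⟩ : ℕ) : ℝ) * ((((c.blocksFun ⟨r, h⟩ - 1 : ℕ) : ℝ)
              * f z0 ^ (c.blocksFun ⟨r, h⟩ - 1 - 1) * fderiv ℝ f z0 (dv m))) * fderiv ℝ f z0 (dv l)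
            + (((c.blocksFun ⟨r, h⟩ : ℕ) : ℝ) * f z0 ^ (c.blocksFun ⟨r, h⟩ - 1))
              * fderiv ℝ (fun x => fderiv ℝ f x (dv l)) z0 (dv m))
            * f z0 ^ (k - c.blocksFun ⟨r, h⟩)
          else 0) := by
  have hfd : Differentiable ℝ f := hf.differentiable (by norm_num)
  have hfun : (fun s : ℝ => deriv (fun t : ℝ =>
        cumulantG f k ((fun _ : Fin k => z0) + s • coordDir k r m + t • coordDir k r l)) 0)
      = (fun s : ℝ => deriv (fun t : ℝ => ∑ c : Composition k, coeffC c *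
          (if h : (r : ℕ) < c.length
            then f (z0 + s • dv m + t • dv l) ^ (c.blocksFun ⟨r, h⟩)
                * f z0 ^ (k - c.blocksFun ⟨r, h⟩)
            else f z0 ^ k)) 0) := by
    funext s
    congr 1
    funext t
    exact Geval f k r z0 m l s t
  rw [hfun]
  have Hin : ∀ s : ℝ, HasDerivAt (fun t : ℝ => ∑ c : Composition k, coeffC c *
      (if h : (r : ℕ) < c.length
        then f (z0 + s • dv m + t • dv l) ^ (c.blocksFun ⟨r, h⟩)
            * f z0 ^ (k - c.blocksFun ⟨r, h⟩)
        else f z0 ^ k))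
      (∑ c : Composition k, coeffC c *
        (if h : (r : ℕ) < c.length
          then ((c.blocksFun ⟨r, h⟩ : ℝ) * f (z0 + s • dv m) ^ (c.blocksFun ⟨r, h⟩ - 1)
              * fderiv ℝ f (z0 + s • dv m) (dv l)) * f z0 ^ (k - c.blocksFun ⟨r, h⟩)
          else 0)) 0 := by
    intro s
    apply HasDerivAt.fun_sum
    intro c _
    by_cases h : (r : ℕ) < c.length
    · simp only [dif_pos h]
      exact ((hasDerivAt_f_pow hfd (z0 + s • dv m) (dv l)
        (c.blocksFun ⟨r, h⟩)).mul_const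
          (f z0 ^ (k - c.blocksFun ⟨r, h⟩))).const_mul (coeffC c)
    · simp only [dif_neg h, mul_zero]
      exact hasDerivAt_const _ _
  have houter : (fun s : ℝ => deriv (fun t : ℝ => ∑ c : Composition k, coeffC c *
      (if h : (r : ℕ) < c.length
        then f (z0 + s • dv m + t • dv l) ^ (c.blocksFun ⟨r, h⟩)
            * f z0 ^ (k - c.blocksFun ⟨r, h⟩)
        else f z0 ^ k)) 0)
      = (fun s : ℝ => ∑ c : Composition k, coeffC c *
        (if h : (r : ℕ) < c.length
          then ((c.blocksFun ⟨r, h⟩ : ℝ) * f (z0 + s • dv m) ^ (c.blocksFun ⟨r, h⟩ - 1)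
              * fderiv ℝ f (z0 + s • dv m) (dv l)) * f z0 ^ (k - c.blocksFun ⟨r, h⟩)
          else 0)) := by
    funext s
    exact (Hin s).deriv
  rw [houter]
  have Hout : HasDerivAt (fun s : ℝ => ∑ c : Composition k, coeffC c *
      (if h : (r : ℕ) < c.length
        then ((c.blocksFun ⟨r, h⟩ : ℝ) * f (z0 + s • dv m) ^ (c.blocksFun ⟨r, h⟩ - 1)
            * fderiv ℝ f (z0 + s • dv m) (dv l)) * f z0 ^ (k - c.blocksFun ⟨r, h⟩)
        else 0))
      (∑ c : Composition k, coeffC c *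
        (if h : (r : ℕ) < c.length then
          (((c.blocksFun ⟨r, h⟩ : ℕ) : ℝ) * ((((c.blocksFun ⟨r, h⟩ - 1 : ℕ) : ℝ)
              * f z0 ^ (c.blocksFun ⟨r, h⟩ - 1 - 1) * fderiv ℝ f z0 (dv m))) * fderiv ℝ f z0 (dv l)
            + (((c.blocksFun ⟨r, h⟩ : ℕ) : ℝ) * f z0 ^ (c.blocksFun ⟨r, h⟩ - 1))
              * fderiv ℝ (fun x => fderiv ℝ f x (dv l)) z0 (dv m))
            * f z0 ^ (k - c.blocksFun ⟨r, h⟩)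
          else 0)) 0 := by
    apply HasDerivAt.fun_sum
    intro c _
    by_cases h : (r : ℕ) < c.length
    · simp only [dif_pos h]
      have hp := hasDerivAt_f_pow hfd z0 (dv m) (c.blocksFun ⟨r, h⟩ - 1)
      have hq := hasDerivAt_F2 hf z0 (dv m) (dv l)
      have hmul := (hp.const_mul ((c.blocksFun ⟨r, h⟩ : ℕ) : ℝ)).mul hq
      have hmul2 := (hmul.mul_const (f z0 ^ (k - c.blocksFun ⟨r, h⟩))).const_mul (coeffC c)
      simpa only [zero_smul, add_zero, Pi.mul_apply] using hmul2
    · simp only [dif_neg h, mul_zero]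
      exact hasDerivAt_const _ _
  exact Hout.deriv


lemma blocksFun_le {k : ℕ} (c : Composition k) (i : Fin c.length) : c.blocksFun i ≤ k := by
  have hsum := c.sum_blocksFun
  calc c.blocksFun i ≤ ∑ j, c.blocksFun j :=
        Finset.single_le_sum (fun j _ => Nat.zero_le _) (Finset.mem_univ i)
    _ = k := hsum

lemma sum_fin_dite {k L : ℕ} (hL : L ≤ k) (W : Fin L → ℝ) :
    ∑ r : Fin k, (if h : (r : ℕ) < L then W ⟨r, h⟩ else 0) = ∑ i : Fin L, W i := by
  have h1 : ∀ r : Fin k, (if h : (r : ℕ) < L then W ⟨r, h⟩ else 0)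
      = (fun j : ℕ => if h : j < L then W ⟨j, h⟩ else 0) (r : ℕ) := fun r => rfl
  rw [Finset.sum_congr rfl (fun r _ => h1 r),
    Fin.sum_univ_eq_sum_range (fun j : ℕ => if h : j < L then W ⟨j, h⟩ else 0) k]
  rw [← Finset.sum_subset (Finset.range_subset_range.2 hL) (by
    intro x _ hx
    rw [Finset.mem_range] at hx
    exact dif_neg hx)]
  rw [← Fin.sum_univ_eq_sum_range (fun j : ℕ => if h : j < L then W ⟨j, h⟩ else 0) L]
  apply Finset.sum_congr rfl
  intro i _
  rw [dif_pos i.isLt]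

lemma scalar_norm (b k : ℕ) (hb : 1 ≤ b) (hbk : b ≤ k) (A Pm Pl Q : ℝ) :
    ((b : ℝ) * (((b - 1 : ℕ) : ℝ) * A ^ (b - 1 - 1) * Pm) * Pl
        + ((b : ℝ) * A ^ (b - 1)) * Q) * A ^ (k - b)
      = ((b : ℝ) * ((b : ℝ) - 1)) * (A ^ (k - 2) * Pm * Pl)
        + (b : ℝ) * (A ^ (k - 1) * Q) := by
  rcases Nat.lt_or_ge b 2 with h2 | h2
  · have hb1 : b = 1 := by omega
    subst hb1
    norm_num
    ring
  · have e0 : ((b - 1 : ℕ) : ℝ) = (b : ℝ) - 1 := by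
      push_cast [Nat.cast_sub hb]
      ring
    have e1 : b - 1 - 1 = b - 2 := by omega
    have e2 : A ^ (b - 2) * A ^ (k - b) = A ^ (k - 2) := by
      rw [← pow_add]
      congr 1
      omega
    have e3 : A ^ (b - 1) * A ^ (k - b) = A ^ (k - 1) := by
      rw [← pow_add]
      congr 1
      omega
    calc ((b : ℝ) * (((b - 1 : ℕ) : ℝ) * A ^ (b - 1 - 1) * Pm) * Pl
        + ((b : ℝ) * A ^ (b - 1)) * Q) * A ^ (k - b)
        = ((b : ℝ) * ((b : ℝ) - 1)) * Pm * Pl * (A ^ (b - 2) * A ^ (k - b))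
          + (b : ℝ) * Q * (A ^ (b - 1) * A ^ (k - b)) := by
          rw [e0, e1]
          ring
      _ = ((b : ℝ) * ((b : ℝ) - 1)) * (A ^ (k - 2) * Pm * Pl)
          + (b : ℝ) * (A ^ (k - 1) * Q) := by
          rw [e2, e3]
          ring

theorem final_test (f : ℂ → ℝ) (hf : ContDiff ℝ 2 f)
    (k : ℕ) (hk : 3 ≤ k) (z0 : ℂ) (m l : Fin 2) :
    ∑ r : Fin k,
      fderiv ℝ (fun z => fderiv ℝ (cumulantG f k) z (coordDir k r l))
        (fun _ => z0) (coordDir k r m) = 0 := by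
  have hG := contDiff_cumulantG hf k
  have h1 : ∀ r : Fin k,
      fderiv ℝ (fun z => fderiv ℝ (cumulantG f k) z (coordDir k r l))
        (fun _ => z0) (coordDir k r m)
      = deriv (fun s : ℝ => deriv (fun t : ℝ =>
          cumulantG f k ((fun _ : Fin k => z0) + s • coordDir k r m + t • coordDir k r l)) 0) 0 :=
    fun r => slice (cumulantG f k) hG (fun _ => z0) (coordDir k r m) (coordDir k r l)
  rw [Finset.sum_congr rfl (fun r _ => h1 r)]
  rw [Finset.sum_congr rfl (fun r _ => D2r hf k r z0 m l)]
  rw [Finset.sum_comm]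
  have key : ∀ c : Composition k,
      (∑ r : Fin k, coeffC c *
        (if h : (r : ℕ) < c.length then
          (((c.blocksFun ⟨r, h⟩ : ℕ) : ℝ) * ((((c.blocksFun ⟨r, h⟩ - 1 : ℕ) : ℝ)
              * f z0 ^ (c.blocksFun ⟨r, h⟩ - 1 - 1) * fderiv ℝ f z0 (dv m))) * fderiv ℝ f z0 (dv l)
            + (((c.blocksFun ⟨r, h⟩ : ℕ) : ℝ) * f z0 ^ (c.blocksFun ⟨r, h⟩ - 1))
              * fderiv ℝ (fun x => fderiv ℝ f x (dv l)) z0 (dv m))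
            * f z0 ^ (k - c.blocksFun ⟨r, h⟩)
          else 0))
      = coeffC c * (∑ i : Fin c.length, ((c.blocksFun i : ℝ) * ((c.blocksFun i : ℝ) - 1)))
          * (f z0 ^ (k - 2) * fderiv ℝ f z0 (dv m) * fderiv ℝ f z0 (dv l))
        + coeffC c * (∑ i : Fin c.length, (c.blocksFun i : ℝ))
          * (f z0 ^ (k - 1) * fderiv ℝ (fun x => fderiv ℝ f x (dv l)) z0 (dv m)) := by
    intro c
    rw [← Finset.mul_sum]
    rw [sum_fin_dite c.length_le (fun i : Fin c.length =>
      (((c.blocksFun i : ℕ) : ℝ) * ((((c.blocksFun i - 1 : ℕ) : ℝ)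
          * f z0 ^ (c.blocksFun i - 1 - 1) * fderiv ℝ f z0 (dv m))) * fderiv ℝ f z0 (dv l)
        + (((c.blocksFun i : ℕ) : ℝ) * f z0 ^ (c.blocksFun i - 1))
          * fderiv ℝ (fun x => fderiv ℝ f x (dv l)) z0 (dv m))
        * f z0 ^ (k - c.blocksFun i))]
    rw [Finset.sum_congr rfl (fun i _ => scalar_norm (c.blocksFun i) k
      (c.one_le_blocksFun i) (blocksFun_le c i) (f z0) (fderiv ℝ f z0 (dv m))
      (fderiv ℝ f z0 (dv l)) (fderiv ℝ (fun x => fderiv ℝ f x (dv l)) z0 (dv m)))]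
    rw [Finset.sum_add_distrib, ← Finset.sum_mul, ← Finset.sum_mul]
    ring
  rw [Finset.sum_congr rfl (fun c _ => key c)]
  rw [Finset.sum_add_distrib, ← Finset.sum_mul, ← Finset.sum_mul]
  have c2 : ∑ c : Composition k, coeffC c *
      (∑ i : Fin c.length, ((c.blocksFun i : ℝ) * ((c.blocksFun i : ℝ) - 1))) = 0 := by
    have h := comb_main (k := k) (by omega) (fun n => (n : ℝ) * ((n : ℝ) - 1))
    unfold coeffC
    rw [h]
    exact alt_quad hk
  have c1 : ∑ c : Composition k, coeffC c *
      (∑ i : Fin c.length, (c.blocksFun i : ℝ)) = 0 := by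
    have h := comb_main (k := k) (by omega) (fun n => (n : ℝ))
    unfold coeffC
    rw [h]
    exact alt_linear (by omega)
  rw [c2, c1]
  ring

end Analysis

end CumulantAux

/-- for `f` of class `C²`, `k ≥ 3`, `z_0 ∈ ℂ` and `m, l ∈ {1,2}`,
`Σ_{r=1}^k (∂_{r m} ∂_{r l} G_k)(z_0,…,z_0) = 0`. -/
theorem cumulantG_diag_second_deriv_diagonal_sum (f : ℂ → ℝ) (hf : ContDiff ℝ 2 f)
    (k : ℕ) (hk : 3 ≤ k) (z0 : ℂ) (m l : Fin 2) :
    ∑ r : Fin k,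
      fderiv ℝ (fun z => fderiv ℝ (cumulantG f k) z (coordDir k r l))
        (fun _ => z0) (coordDir k r m) = 0 := by
  exact CumulantAux.final_test f hf k hk z0 m l
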